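/- If Λ_D : Pauli_A → Pauli_D (mod phase) and Ω_A : Pauli_D → Pauli_A (mod phase) are the forward and backward maps of a Clifford unitary U (so that α_{P_A,Q_D} = F_{Λ_D(P_A),Q_D} = F_{P_A,Ω_A(Q_D)} for all P_A, Q_D), and Λ_D is injective, then Ω_A is surjective; moreover the preimages Q_D with Ω_A(Q_D) = P_A can be characterized by (1/d_A^2) ∑_{P'_A} F_{R_A,P'_A} α_{P'_A,Q_D} = δ_{Ω_A(Q_D),R_A}. -/

import Mathlib

open Matrix Kronecker BigOperators

/-- The `n`-qubit Pauli operator `X^x Z^z` (symplectic representation). -/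
noncomputable def pauli {n : ℕ} (x z : Fin n → ZMod 2) :
    Matrix (Fin n → ZMod 2) (Fin n → ZMod 2) ℂ :=
  fun j k => if j = k + x then ((-1 : ℂ)) ^ (∑ i, (z i * k i).val) else 0

/-- The commutation-phase matrix `F_{P,Q} = (1/d) Tr(PQP†Q†)` on `n` qubits. -/
noncomputable def Fmat (n : ℕ) (p q : (Fin n → ZMod 2) × (Fin n → ZMod 2)) : ℂ :=
  ((2 ^ n : ℂ))⁻¹ * (pauli p.1 p.2 * pauli q.1 q.2 *
    (pauli p.1 p.2)ᴴ * (pauli q.1 q.2)ᴴ).trace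

/-- The OTOC `α_{P_A,Q_D} = (1/d) Tr(P_A(t) Q_D P_A(t)† Q_D†)`. -/
noncomputable def otoc (nA nB nC nD : ℕ)
    (U : Matrix ((Fin nC → ZMod 2) × (Fin nD → ZMod 2))
      ((Fin nA → ZMod 2) × (Fin nB → ZMod 2)) ℂ)
    (x z : Fin nA → ZMod 2) (xq zq : Fin nD → ZMod 2) : ℂ :=
  ((2 ^ nC * 2 ^ nD : ℂ))⁻¹ *
    (U * (pauli x z ⊗ₖ (1 : Matrix (Fin nB → ZMod 2) (Fin nB → ZMod 2) ℂ)) * Uᴴ *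
      ((1 : Matrix (Fin nC → ZMod 2) (Fin nC → ZMod 2) ℂ) ⊗ₖ pauli xq zq) *
      U * ((pauli x z)ᴴ ⊗ₖ (1 : Matrix (Fin nB → ZMod 2) (Fin nB → ZMod 2) ℂ)) * Uᴴ *
      ((1 : Matrix (Fin nC → ZMod 2) (Fin nC → ZMod 2) ℂ) ⊗ₖ (pauli xq zq)ᴴ)).trace


namespace Stmt15Aux

open Finset

/-! ### The sign character and symplectic weights -/

noncomputable def χ : ZMod 2 → ℂ := fun a => if a = 0 then 1 else -1

lemma z2c (a : ZMod 2) : a = 0 ∨ a = 1 := by revert a; decide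
lemma χ_zero : χ 0 = 1 := by simp [χ]
lemma χ_add (a b : ZMod 2) : χ (a + b) = χ a * χ b := by
  rcases z2c a with rfl | rfl <;> rcases z2c b with rfl | rfl <;> simp [χ] <;> decide
lemma χ_cases (a : ZMod 2) : χ a = 1 ∨ χ a = -1 := by
  rcases z2c a with rfl | rfl <;> simp [χ]
lemma χ_sq (a : ZMod 2) : χ a * χ a = 1 := by
  rcases χ_cases a with h | h <;> rw [h] <;> norm_num
lemma χ_eq_one (a : ZMod 2) (h : χ a = 1) : a = 0 := by
  rcases z2c a with rfl | rfl <;> simp_all [χ]; norm_num at h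
lemma χ_pow (a : ZMod 2) : ((-1 : ℂ)) ^ a.val = χ a := by
  rcases z2c a with rfl | rfl <;> simp [χ, ZMod.val_one]

noncomputable def w {n : ℕ} (z x : Fin n → ZMod 2) : ℂ := ∏ i, χ (z i * x i)

lemma w_pow {n : ℕ} (z x : Fin n → ZMod 2) :
    ((-1 : ℂ)) ^ (∑ i, (z i * x i).val) = w z x := by
  rw [w, ← Finset.prod_pow_eq_pow_sum]
  exact Finset.prod_congr rfl fun i _ => χ_pow _

lemma w_comm {n : ℕ} (z x : Fin n → ZMod 2) : w z x = w x z := by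
  unfold w; exact Finset.prod_congr rfl fun i _ => by rw [mul_comm]
lemma w_add_right {n : ℕ} (z x y : Fin n → ZMod 2) : w z (x + y) = w z x * w z y := by
  unfold w; rw [← Finset.prod_mul_distrib]
  exact Finset.prod_congr rfl fun i _ => by
    show χ (z i * (x i + y i)) = _ ; rw [mul_add, χ_add]
lemma w_add_left {n : ℕ} (z y x : Fin n → ZMod 2) : w (z + y) x = w z x * w y x := by
  rw [w_comm, w_add_right, w_comm x z, w_comm x y]
lemma w_zero_right {n : ℕ} (z : Fin n → ZMod 2) : w z 0 = 1 := by
  unfold w; simp [χ_zero]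
lemma w_zero_left {n : ℕ} (x : Fin n → ZMod 2) : w 0 x = 1 := by
  rw [w_comm, w_zero_right]
lemma w_sq {n : ℕ} (z x : Fin n → ZMod 2) : w z x * w z x = 1 := by
  unfold w; rw [← Finset.prod_mul_distrib]; simp [χ_sq]
lemma conj_w {n : ℕ} (z x : Fin n → ZMod 2) : (starRingEnd ℂ) (w z x) = w z x := by
  unfold w; rw [map_prod]
  refine Finset.prod_congr rfl fun i _ => ?_
  rcases χ_cases (z i * x i) with h | h <;> rw [h] <;> simp

lemma zmod2_add_self (a : ZMod 2) : a + a = 0 := by fin_cases a <;> decide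
lemma v_add_self {n : ℕ} (x : Fin n → ZMod 2) : x + x = 0 :=
  funext fun i => zmod2_add_self (x i)
lemma v_aba {n : ℕ} (a b : Fin n → ZMod 2) : a + b + a = b := by
  rw [add_comm a b, add_assoc, v_add_self, add_zero]
lemma v_eq_addx {n : ℕ} (x a b : Fin n → ZMod 2) : (a = b + x) ↔ (b = a + x) := by
  constructor <;> intro h <;> simp [h, add_assoc, v_add_self]
lemma v_add_eq_zero {n : ℕ} (a b : Fin n → ZMod 2) : a + b = 0 ↔ b = a := by
  constructor
  · intro h
    have h2 : a + (a + b) = a := by rw [h, add_zero]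
    rwa [← add_assoc, v_add_self, zero_add] at h2
  · intro h; rw [h, v_add_self]

lemma zmod2_univ : (Finset.univ : Finset (ZMod 2)) = {0, 1} := by decide
lemma sum_χ (a : ZMod 2) : ∑ b : ZMod 2, χ (a * b) = if a = 0 then 2 else 0 := by
  rw [zmod2_univ]
  rcases z2c a with rfl | rfl <;> norm_num [χ]

lemma sum_w {n : ℕ} (z : Fin n → ZMod 2) :
    ∑ x : Fin n → ZMod 2, w z x = if z = 0 then (2 ^ n : ℂ) else 0 := by
  have h : ∑ x : Fin n → ZMod 2, w z x = ∏ i, ∑ b : ZMod 2, χ (z i * b) := by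
    rw [Finset.prod_univ_sum, Fintype.piFinset_univ]
    rfl
  rw [h]
  by_cases hz : z = 0
  · subst hz; simp [sum_χ, χ_zero]
  · obtain ⟨i, hi⟩ : ∃ i, z i ≠ 0 := by
      by_contra hc; push_neg at hc; exact hz (funext hc)
    rw [if_neg hz]
    exact Finset.prod_eq_zero (Finset.mem_univ i) (by simp [sum_χ, hi])

/-! ### Pauli matrix algebra -/

lemma pauli_apply {n : ℕ} (x z j k : Fin n → ZMod 2) :
    pauli x z j k = if j = k + x then w z k else 0 := by
  rw [pauli, w_pow]

lemma pauli_zero {n : ℕ} : pauli (0 : Fin n → ZMod 2) 0 = 1 := by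
  ext j k
  rw [pauli_apply, w_zero_left, Matrix.one_apply, add_zero]

lemma pauli_mul {n : ℕ} (x z x' z' : Fin n → ZMod 2) :
    pauli x z * pauli x' z' = w z x' • pauli (x + x') (z + z') := by
  ext j k
  rw [Matrix.mul_apply, Matrix.smul_apply]
  rw [Finset.sum_eq_single (k + x')]
  rotate_left
  · intro m _ hm
    rw [pauli_apply x' z' m k, if_neg (fun h => hm (by rw [h])), mul_zero]
  · intro h; exact absurd (Finset.mem_univ _) h
  rw [pauli_apply, pauli_apply, pauli_apply, if_pos rfl]
  have hc : (j = k + x' + x) ↔ (j = k + (x + x')) := by rw [add_assoc, add_comm x' x]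
  by_cases h : j = k + (x + x')
  · rw [if_pos (hc.mpr h), if_pos h, w_add_right z k x', w_add_left, smul_eq_mul]; ring
  · rw [if_neg (fun h2 => h (hc.mp h2)), if_neg h, zero_mul, smul_zero]

lemma pauli_conjT {n : ℕ} (x z : Fin n → ZMod 2) :
    (pauli x z)ᴴ = w z x • pauli x z := by
  ext j k
  rw [Matrix.conjTranspose_apply, Matrix.smul_apply, pauli_apply, pauli_apply]
  by_cases h : k = j + x
  · rw [if_pos h, if_pos ((v_eq_addx x k j).mp h)]
    show (starRingEnd ℂ) (w z j) = _
    rw [conj_w, (v_eq_addx x k j).mp h, w_add_right, smul_eq_mul]; ring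
  · rw [if_neg h, if_neg (fun h2 => h ((v_eq_addx x j k).mp h2)), star_zero, smul_zero]

lemma pauli_mul_conjT {n : ℕ} (x z : Fin n → ZMod 2) :
    pauli x z * (pauli x z)ᴴ = 1 := by
  rw [pauli_conjT, Matrix.mul_smul, pauli_mul, smul_smul, w_sq,
    v_add_self, v_add_self, pauli_zero, one_smul]

/-- the key commutator identity -/
lemma PQPQ {n : ℕ} (p1 p2 q1 q2 : Fin n → ZMod 2) :
    pauli p1 p2 * pauli q1 q2 * (pauli p1 p2)ᴴ * (pauli q1 q2)ᴴ
      = (w p2 q1 * w q2 p1) • 1 := by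
  simp only [pauli_conjT, Matrix.mul_smul, Matrix.smul_mul, pauli_mul, smul_smul,
    v_aba, v_add_self, pauli_zero, w_zero_right, w_zero_left, w_add_left, w_add_right]
  congr 1
  have h1 := w_sq p2 p1
  have h2 := w_sq q2 q1
  linear_combination (w p2 q1 * w q2 p1 * w q2 q1 * w q2 q1) * h1 + (w p2 q1 * w q2 p1) * h2

lemma card_V (n : ℕ) : Fintype.card (Fin n → ZMod 2) = 2 ^ n := by simp

lemma trace_one_V (n : ℕ) :
    (1 : Matrix (Fin n → ZMod 2) (Fin n → ZMod 2) ℂ).trace = (2 ^ n : ℂ) := by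
  rw [Matrix.trace_one, card_V]; norm_num

lemma two_pow_ne (n : ℕ) : (2 ^ n : ℂ) ≠ 0 := pow_ne_zero _ two_ne_zero

lemma Fmat_eq (n : ℕ) (p q : (Fin n → ZMod 2) × (Fin n → ZMod 2)) :
    Fmat n p q = w p.2 q.1 * w q.2 p.1 := by
  rw [Fmat, PQPQ, Matrix.trace_smul, trace_one_V, smul_eq_mul]
  field_simp

lemma kronecker_conjT {m p : Type*} [Fintype m] [Fintype p] [DecidableEq m] [DecidableEq p]
    (A : Matrix m m ℂ) (B : Matrix p p ℂ) : (A ⊗ₖ B)ᴴ = Aᴴ ⊗ₖ Bᴴ := by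
  ext ⟨i, j⟩ ⟨k, l⟩
  simp [Matrix.conjTranspose_apply, Matrix.kroneckerMap_apply, star_mul', mul_comm]

lemma norm_one_mul_conj {cv : ℂ} (h : ‖cv‖ = 1) : cv * star cv = 1 := by
  rw [← starRingEnd_apply, Complex.mul_conj]
  norm_cast
  rw [Complex.normSq_eq_norm_sq, h]
  norm_num

lemma w_single {n : ℕ} (b : Fin n → ZMod 2) (i : Fin n) :
    w b (Pi.single i 1) = χ (b i) := by
  rw [w]
  rw [Finset.prod_eq_single i]
  · rw [Pi.single_eq_same, mul_one]
  · intro k _ hk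
    rw [Pi.single_eq_of_ne hk, mul_zero, χ_zero]
  · simp

lemma extract_D {nC nD : ℕ} (s : ℂ) (a b : Fin nC → ZMod 2) (a' b' : Fin nD → ZMod 2)
    (h : s • (pauli a b ⊗ₖ pauli a' b') = 1) : a' = 0 ∧ b' = 0 := by
  have hE : ∀ p q : (Fin nC → ZMod 2) × (Fin nD → ZMod 2),
      s * (pauli a b p.1 q.1 * pauli a' b' p.2 q.2)
        = if p = q then (1 : ℂ) else 0 := by
    intro p q
    have := congrFun (congrFun h p) q
    rwa [Matrix.smul_apply, Matrix.kroneckerMap_apply, Matrix.one_apply, smul_eq_mul] at this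
  have h00 := hE (0, 0) (0, 0)
  rw [if_pos rfl, pauli_apply, pauli_apply] at h00
  have ha : a = 0 := by
    by_contra hne
    rw [if_neg (show ¬((0 : Fin nC → ZMod 2) = 0 + a) by simpa [eq_comm] using hne)] at h00
    simp at h00
  have ha' : a' = 0 := by
    by_contra hne
    rw [if_neg (show ¬((0 : Fin nD → ZMod 2) = 0 + a') by simpa [eq_comm] using hne)] at h00
    simp at h00
  refine ⟨ha', ?_⟩
  rw [if_pos (by rw [ha, add_zero]), if_pos (by rw [ha', add_zero]),
    w_zero_right, w_zero_right] at h00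
  have hs : s = 1 := by simpa using h00
  have hj : ∀ j : Fin nD → ZMod 2, w b' j = 1 := by
    intro j
    have hjj := hE (0, j) (0, j)
    rw [if_pos rfl, pauli_apply, pauli_apply,
      if_pos (by rw [ha, add_zero]), if_pos (by rw [ha', add_zero]),
      w_zero_right, hs] at hjj
    simpa using hjj
  funext i
  exact χ_eq_one _ (by rw [← w_single b' i]; exact hj _)

section main
variable {nA nB nC nD : ℕ}
  (U : Matrix ((Fin nC → ZMod 2) × (Fin nD → ZMod 2))
      ((Fin nA → ZMod 2) × (Fin nB → ZMod 2)) ℂ)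

lemma otoc_forward (x z : Fin nA → ZMod 2) (xq zq : Fin nD → ZMod 2)
    (cv : ℂ) (hc : ‖cv‖ = 1) (a b : Fin nC → ZMod 2) (a' b' : Fin nD → ZMod 2)
    (heq : U * (pauli x z ⊗ₖ (1 : Matrix (Fin nB → ZMod 2) (Fin nB → ZMod 2) ℂ)) * Uᴴ
        = cv • (pauli a b ⊗ₖ pauli a' b')) :
    otoc nA nB nC nD U x z xq zq = w b' xq * w zq a' := by
  have hconj : U * ((pauli x z)ᴴ ⊗ₖ (1 : Matrix (Fin nB → ZMod 2) (Fin nB → ZMod 2) ℂ)) * Uᴴ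
      = star cv • ((pauli a b)ᴴ ⊗ₖ (pauli a' b')ᴴ) := by
    have h1 : ((pauli x z)ᴴ ⊗ₖ (1 : Matrix (Fin nB → ZMod 2) (Fin nB → ZMod 2) ℂ))
        = (pauli x z ⊗ₖ (1 : Matrix (Fin nB → ZMod 2) (Fin nB → ZMod 2) ℂ))ᴴ := by
      rw [kronecker_conjT, Matrix.conjTranspose_one]
    rw [h1, show U * (pauli x z ⊗ₖ (1 : Matrix (Fin nB → ZMod 2) (Fin nB → ZMod 2) ℂ))ᴴ * Uᴴ
        = (U * (pauli x z ⊗ₖ (1 : Matrix (Fin nB → ZMod 2) (Fin nB → ZMod 2) ℂ)) * Uᴴ)ᴴ by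
      rw [Matrix.conjTranspose_mul, Matrix.conjTranspose_mul,
        Matrix.conjTranspose_conjTranspose, Matrix.mul_assoc]]
    rw [heq, Matrix.conjTranspose_smul, kronecker_conjT]
  rw [otoc]
  rw [show U * (pauli x z ⊗ₖ (1 : Matrix (Fin nB → ZMod 2) (Fin nB → ZMod 2) ℂ)) * Uᴴ *
      ((1 : Matrix (Fin nC → ZMod 2) (Fin nC → ZMod 2) ℂ) ⊗ₖ pauli xq zq) *
      U * ((pauli x z)ᴴ ⊗ₖ (1 : Matrix (Fin nB → ZMod 2) (Fin nB → ZMod 2) ℂ)) * Uᴴ *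
      ((1 : Matrix (Fin nC → ZMod 2) (Fin nC → ZMod 2) ℂ) ⊗ₖ (pauli xq zq)ᴴ)
      = (U * (pauli x z ⊗ₖ (1 : Matrix (Fin nB → ZMod 2) (Fin nB → ZMod 2) ℂ)) * Uᴴ) *
        ((1 : Matrix (Fin nC → ZMod 2) (Fin nC → ZMod 2) ℂ) ⊗ₖ pauli xq zq) *
        (U * ((pauli x z)ᴴ ⊗ₖ (1 : Matrix (Fin nB → ZMod 2) (Fin nB → ZMod 2) ℂ)) * Uᴴ) *
        ((1 : Matrix (Fin nC → ZMod 2) (Fin nC → ZMod 2) ℂ) ⊗ₖ (pauli xq zq)ᴴ)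
      by simp only [Matrix.mul_assoc]]
  rw [heq, hconj]
  simp only [Matrix.smul_mul, Matrix.mul_smul, smul_smul]
  rw [mul_comm (star cv) cv, norm_one_mul_conj hc, one_smul]
  rw [← Matrix.mul_kronecker_mul, ← Matrix.mul_kronecker_mul, ← Matrix.mul_kronecker_mul]
  rw [show pauli a b * 1 * (pauli a b)ᴴ
      = (1 : Matrix (Fin nC → ZMod 2) (Fin nC → ZMod 2) ℂ) by
      rw [Matrix.mul_one, pauli_mul_conjT], PQPQ a' b' xq zq]
  rw [show (1 : Matrix (Fin nC → ZMod 2) (Fin nC → ZMod 2) ℂ) * 1 = 1 from Matrix.one_mul 1]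
  rw [Matrix.kronecker_smul, Matrix.one_kronecker_one, Matrix.trace_smul, Matrix.trace_one,
    smul_eq_mul]
  have : (Fintype.card ((Fin nC → ZMod 2) × (Fin nD → ZMod 2)) : ℂ) = 2 ^ nC * 2 ^ nD := by
    rw [Fintype.card_prod, card_V, card_V]; push_cast; ring
  rw [this]
  field_simp

lemma cardAB (hU1 : U * Uᴴ = 1) (hU2 : Uᴴ * U = 1) :
    ((2 : ℂ) ^ nA * 2 ^ nB) = 2 ^ nC * 2 ^ nD := by
  have h := Matrix.trace_mul_comm U Uᴴ
  rw [hU1, hU2] at h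
  rw [Matrix.trace_one, Matrix.trace_one] at h
  rw [Fintype.card_prod, Fintype.card_prod, card_V, card_V, card_V, card_V] at h
  push_cast at h
  exact h.symm

lemma otoc_backward (hU1 : U * Uᴴ = 1) (hU2 : Uᴴ * U = 1)
    (x z : Fin nA → ZMod 2) (xq zq : Fin nD → ZMod 2)
    (cv : ℂ) (hc : ‖cv‖ = 1) (a b : Fin nA → ZMod 2) (a' b' : Fin nB → ZMod 2)
    (heq : Uᴴ * ((1 : Matrix (Fin nC → ZMod 2) (Fin nC → ZMod 2) ℂ) ⊗ₖ pauli xq zq) * U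
        = cv • (pauli a b ⊗ₖ pauli a' b')) :
    otoc nA nB nC nD U x z xq zq = w z a * w b x := by
  have hconj : Uᴴ * ((1 : Matrix (Fin nC → ZMod 2) (Fin nC → ZMod 2) ℂ) ⊗ₖ (pauli xq zq)ᴴ) * U
      = star cv • ((pauli a b)ᴴ ⊗ₖ (pauli a' b')ᴴ) := by
    have h1 : ((1 : Matrix (Fin nC → ZMod 2) (Fin nC → ZMod 2) ℂ) ⊗ₖ (pauli xq zq)ᴴ)
        = ((1 : Matrix (Fin nC → ZMod 2) (Fin nC → ZMod 2) ℂ) ⊗ₖ pauli xq zq)ᴴ := by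
      rw [kronecker_conjT, Matrix.conjTranspose_one]
    rw [h1, show Uᴴ * ((1 : Matrix (Fin nC → ZMod 2) (Fin nC → ZMod 2) ℂ) ⊗ₖ pauli xq zq)ᴴ * U
        = (Uᴴ * ((1 : Matrix (Fin nC → ZMod 2) (Fin nC → ZMod 2) ℂ) ⊗ₖ pauli xq zq) * U)ᴴ by
      rw [Matrix.conjTranspose_mul, Matrix.conjTranspose_mul,
        Matrix.conjTranspose_conjTranspose, Matrix.mul_assoc]]
    rw [heq, Matrix.conjTranspose_smul, kronecker_conjT]
  rw [otoc]
  rw [show U * (pauli x z ⊗ₖ (1 : Matrix (Fin nB → ZMod 2) (Fin nB → ZMod 2) ℂ)) * Uᴴ *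
      ((1 : Matrix (Fin nC → ZMod 2) (Fin nC → ZMod 2) ℂ) ⊗ₖ pauli xq zq) *
      U * ((pauli x z)ᴴ ⊗ₖ (1 : Matrix (Fin nB → ZMod 2) (Fin nB → ZMod 2) ℂ)) * Uᴴ *
      ((1 : Matrix (Fin nC → ZMod 2) (Fin nC → ZMod 2) ℂ) ⊗ₖ (pauli xq zq)ᴴ)
      = U * ((pauli x z ⊗ₖ (1 : Matrix (Fin nB → ZMod 2) (Fin nB → ZMod 2) ℂ)) *
        (Uᴴ * ((1 : Matrix (Fin nC → ZMod 2) (Fin nC → ZMod 2) ℂ) ⊗ₖ pauli xq zq) * U) *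
        ((pauli x z)ᴴ ⊗ₖ (1 : Matrix (Fin nB → ZMod 2) (Fin nB → ZMod 2) ℂ)) *
        (Uᴴ * ((1 : Matrix (Fin nC → ZMod 2) (Fin nC → ZMod 2) ℂ) ⊗ₖ (pauli xq zq)ᴴ)))
      by simp only [Matrix.mul_assoc]]
  rw [Matrix.trace_mul_comm]
  rw [show (pauli x z ⊗ₖ (1 : Matrix (Fin nB → ZMod 2) (Fin nB → ZMod 2) ℂ)) *
        (Uᴴ * ((1 : Matrix (Fin nC → ZMod 2) (Fin nC → ZMod 2) ℂ) ⊗ₖ pauli xq zq) * U) *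
        ((pauli x z)ᴴ ⊗ₖ (1 : Matrix (Fin nB → ZMod 2) (Fin nB → ZMod 2) ℂ)) *
        (Uᴴ * ((1 : Matrix (Fin nC → ZMod 2) (Fin nC → ZMod 2) ℂ) ⊗ₖ (pauli xq zq)ᴴ)) * U
      = (pauli x z ⊗ₖ (1 : Matrix (Fin nB → ZMod 2) (Fin nB → ZMod 2) ℂ)) *
        (Uᴴ * ((1 : Matrix (Fin nC → ZMod 2) (Fin nC → ZMod 2) ℂ) ⊗ₖ pauli xq zq) * U) *
        ((pauli x z)ᴴ ⊗ₖ (1 : Matrix (Fin nB → ZMod 2) (Fin nB → ZMod 2) ℂ)) *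
        (Uᴴ * ((1 : Matrix (Fin nC → ZMod 2) (Fin nC → ZMod 2) ℂ) ⊗ₖ (pauli xq zq)ᴴ) * U)
      by simp only [Matrix.mul_assoc]]
  rw [heq, hconj]
  simp only [Matrix.smul_mul, Matrix.mul_smul, smul_smul]
  rw [mul_comm (star cv) cv, norm_one_mul_conj hc, one_smul]
  rw [← Matrix.mul_kronecker_mul, ← Matrix.mul_kronecker_mul, ← Matrix.mul_kronecker_mul]
  rw [show (1 : Matrix (Fin nB → ZMod 2) (Fin nB → ZMod 2) ℂ) * pauli a' b' * 1 * (pauli a' b')ᴴ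
      = (1 : Matrix (Fin nB → ZMod 2) (Fin nB → ZMod 2) ℂ) by
      rw [Matrix.one_mul, Matrix.mul_one, pauli_mul_conjT],
    show pauli x z * pauli a b * (pauli x z)ᴴ * (pauli a b)ᴴ
      = (w z a * w b x) • 1 from PQPQ x z a b]
  rw [Matrix.smul_kronecker, Matrix.one_kronecker_one, Matrix.trace_smul, Matrix.trace_one,
    smul_eq_mul]
  have hcard : (Fintype.card ((Fin nA → ZMod 2) × (Fin nB → ZMod 2)) : ℂ) = 2 ^ nC * 2 ^ nD := by
    rw [Fintype.card_prod, card_V, card_V]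
    push_cast
    exact cardAB U hU1 hU2
  rw [hcard]
  field_simp

end main
end Stmt15Aux

open Stmt15Aux in
/-- If `Λ_D` is injective then `Ω_A` is surjective, and the preimages are
characterized by `(1/d_A²) ∑_{P'_A} F_{R_A,P'_A} α_{P'_A,Q_D} = δ_{Ω_A(Q_D),R_A}`. -/
theorem stmt15 (nA nB nC nD : ℕ)
    (U : Matrix ((Fin nC → ZMod 2) × (Fin nD → ZMod 2))
      ((Fin nA → ZMod 2) × (Fin nB → ZMod 2)) ℂ)
    (hU1 : U * Uᴴ = 1) (hU2 : Uᴴ * U = 1)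
    (c : (Fin nA → ZMod 2) → (Fin nA → ZMod 2) → ℂ)
    (xc zc : (Fin nA → ZMod 2) → (Fin nA → ZMod 2) → (Fin nC → ZMod 2))
    (xd zd : (Fin nA → ZMod 2) → (Fin nA → ZMod 2) → (Fin nD → ZMod 2))
    (hClif : ∀ x z : Fin nA → ZMod 2, ‖c x z‖ = 1 ∧
      U * (pauli x z ⊗ₖ (1 : Matrix (Fin nB → ZMod 2) (Fin nB → ZMod 2) ℂ)) * Uᴴ
        = c x z • (pauli (xc x z) (zc x z) ⊗ₖ pauli (xd x z) (zd x z)))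
    (c' : (Fin nD → ZMod 2) → (Fin nD → ZMod 2) → ℂ)
    (gxa gza : (Fin nD → ZMod 2) → (Fin nD → ZMod 2) → (Fin nA → ZMod 2))
    (gxb gzb : (Fin nD → ZMod 2) → (Fin nD → ZMod 2) → (Fin nB → ZMod 2))
    (hClif' : ∀ xq zq : Fin nD → ZMod 2, ‖c' xq zq‖ = 1 ∧
      Uᴴ * ((1 : Matrix (Fin nC → ZMod 2) (Fin nC → ZMod 2) ℂ) ⊗ₖ pauli xq zq) * U
        = c' xq zq • (pauli (gxa xq zq) (gza xq zq) ⊗ₖ pauli (gxb xq zq) (gzb xq zq)))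
    (hinj : Function.Injective
      (fun PA : (Fin nA → ZMod 2) × (Fin nA → ZMod 2) => (xd PA.1 PA.2, zd PA.1 PA.2))) :
    (Function.Surjective
      (fun QD : (Fin nD → ZMod 2) × (Fin nD → ZMod 2) => (gxa QD.1 QD.2, gza QD.1 QD.2)))
    ∧ ∀ (xq zq : Fin nD → ZMod 2) (RA : (Fin nA → ZMod 2) × (Fin nA → ZMod 2)),
      (((2 ^ nA : ℂ)) ^ 2)⁻¹ *
        ∑ PA : (Fin nA → ZMod 2) × (Fin nA → ZMod 2),
          Fmat nA RA PA * otoc nA nB nC nD U PA.1 PA.2 xq zq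
        = if (gxa xq zq, gza xq zq) = RA then 1 else 0 := by
  classical
  have hback : ∀ (xq zq : Fin nD → ZMod 2) (x z : Fin nA → ZMod 2),
      otoc nA nB nC nD U x z xq zq = w z (gxa xq zq) * w (gza xq zq) x :=
    fun xq zq x z => otoc_backward U hU1 hU2 x z xq zq _ (hClif' xq zq).1 _ _ _ _
      (hClif' xq zq).2
  have hfwd : ∀ (x z : Fin nA → ZMod 2) (xq zq : Fin nD → ZMod 2),
      otoc nA nB nC nD U x z xq zq = w (zd x z) xq * w zq (xd x z) :=
    fun x z xq zq => otoc_forward U x z xq zq _ (hClif x z).1 _ _ _ _ (hClif x z).2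
  have hpart2 : ∀ (xq zq : Fin nD → ZMod 2) (RA : (Fin nA → ZMod 2) × (Fin nA → ZMod 2)),
      (((2 ^ nA : ℂ)) ^ 2)⁻¹ *
        ∑ PA : (Fin nA → ZMod 2) × (Fin nA → ZMod 2),
          Fmat nA RA PA * otoc nA nB nC nD U PA.1 PA.2 xq zq
        = if (gxa xq zq, gza xq zq) = RA then 1 else 0 := by
    intro xq zq RA
    have hsum : ∑ PA : (Fin nA → ZMod 2) × (Fin nA → ZMod 2),
        Fmat nA RA PA * otoc nA nB nC nD U PA.1 PA.2 xq zq
        = (∑ x : Fin nA → ZMod 2, w (RA.2 + gza xq zq) x) *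
          (∑ z : Fin nA → ZMod 2, w z (RA.1 + gxa xq zq)) := by
      rw [Finset.sum_mul_sum, Fintype.sum_prod_type]
      refine Finset.sum_congr rfl fun x _ => Finset.sum_congr rfl fun z _ => ?_
      rw [Fmat_eq, hback, w_add_left, w_add_right]
      ring
    rw [hsum, sum_w,
      show ∑ z : Fin nA → ZMod 2, w z (RA.1 + gxa xq zq)
        = ∑ z : Fin nA → ZMod 2, w (RA.1 + gxa xq zq) z from
        Finset.sum_congr rfl fun z _ => w_comm _ _, sum_w]
    by_cases h1 : gxa xq zq = RA.1 <;> by_cases h2 : gza xq zq = RA.2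
    · rw [if_pos ((v_add_eq_zero _ _).mpr h2), if_pos ((v_add_eq_zero _ _).mpr h1),
        if_pos (Prod.ext_iff.mpr ⟨h1, h2⟩)]
      rw [sq]
      rw [mul_inv]
      have := two_pow_ne nA
      field_simp
    · rw [if_neg (fun h => h2 ((v_add_eq_zero _ _).mp h)),
        if_neg (fun h => (Prod.ext_iff.mp h).2 |> h2), zero_mul, mul_zero]
    · rw [if_neg (fun h => h1 ((v_add_eq_zero _ _).mp h)),
        if_neg (fun h => (Prod.ext_iff.mp h).1 |> h1), mul_zero, mul_zero]
    · rw [if_neg (fun h => h1 ((v_add_eq_zero _ _).mp h)),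
        if_neg (fun h => (Prod.ext_iff.mp h).1 |> h1), mul_zero, mul_zero]
  refine ⟨?_, hpart2⟩
  intro RA
  by_contra hno
  push_neg at hno
  have hzero : ∀ xq zq : Fin nD → ZMod 2,
      ∑ PA : (Fin nA → ZMod 2) × (Fin nA → ZMod 2),
        Fmat nA RA PA * otoc nA nB nC nD U PA.1 PA.2 xq zq = 0 := by
    intro xq zq
    have h := hpart2 xq zq RA
    rw [if_neg (hno (xq, zq))] at h
    exact (mul_eq_zero.mp h).resolve_left
      (inv_ne_zero (pow_ne_zero _ (two_pow_ne nA)))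
  have h00 := (hClif 0 0).2
  rw [pauli_zero, Matrix.one_kronecker_one, Matrix.mul_one, hU1] at h00
  have hd0 := extract_D _ _ _ _ _ h00.symm
  have hQ : ∀ x z : Fin nA → ZMod 2,
      ∑ xq : Fin nD → ZMod 2, ∑ zq : Fin nD → ZMod 2, otoc nA nB nC nD U x z xq zq
        = (if zd x z = 0 then (2 ^ nD : ℂ) else 0) *
          (if xd x z = 0 then (2 ^ nD : ℂ) else 0) := by
    intro x z
    rw [show ∑ xq : Fin nD → ZMod 2, ∑ zq : Fin nD → ZMod 2, otoc nA nB nC nD U x z xq zq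
        = ∑ xq : Fin nD → ZMod 2, ∑ zq : Fin nD → ZMod 2, w (zd x z) xq * w zq (xd x z) from
        Finset.sum_congr rfl fun xq _ => Finset.sum_congr rfl fun zq _ => hfwd x z xq zq]
    rw [← Finset.sum_mul_sum, sum_w,
      show ∑ zq : Fin nD → ZMod 2, w zq (xd x z)
        = ∑ zq : Fin nD → ZMod 2, w (xd x z) zq from
        Finset.sum_congr rfl fun zq _ => w_comm _ _, sum_w]
  have htot : ∑ PA : (Fin nA → ZMod 2) × (Fin nA → ZMod 2),
      Fmat nA RA PA * (∑ xq : Fin nD → ZMod 2, ∑ zq : Fin nD → ZMod 2,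
        otoc nA nB nC nD U PA.1 PA.2 xq zq) = (2 ^ nD : ℂ) * 2 ^ nD := by
    rw [Finset.sum_eq_single ((0, 0) : (Fin nA → ZMod 2) × (Fin nA → ZMod 2))]
    · rw [hQ, hd0.1, hd0.2]
      simp [Fmat_eq, w_zero_left, w_zero_right]
    · intro PA _ hPA
      rw [hQ]
      have hnand : ¬(xd PA.1 PA.2 = 0 ∧ zd PA.1 PA.2 = 0) := by
        rintro ⟨hx, hz⟩
        exact hPA (hinj (a₁ := PA) (a₂ := ((0, 0) : (Fin nA → ZMod 2) × (Fin nA → ZMod 2)))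
          (show (xd PA.1 PA.2, zd PA.1 PA.2) = (xd 0 0, zd 0 0) by
            rw [hx, hz, hd0.1, hd0.2]))
      by_cases hx : xd PA.1 PA.2 = 0
      · rw [if_neg (fun h => hnand ⟨hx, h⟩), zero_mul, mul_zero]
      · rw [if_neg hx, mul_zero, mul_zero]
    · intro h; exact absurd (Finset.mem_univ _) h
  have hzero' : ∑ PA : (Fin nA → ZMod 2) × (Fin nA → ZMod 2),
      Fmat nA RA PA * (∑ xq : Fin nD → ZMod 2, ∑ zq : Fin nD → ZMod 2,
        otoc nA nB nC nD U PA.1 PA.2 xq zq) = 0 := by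
    have step : ∑ PA : (Fin nA → ZMod 2) × (Fin nA → ZMod 2),
        Fmat nA RA PA * (∑ xq : Fin nD → ZMod 2, ∑ zq : Fin nD → ZMod 2,
          otoc nA nB nC nD U PA.1 PA.2 xq zq)
        = ∑ xq : Fin nD → ZMod 2, ∑ zq : Fin nD → ZMod 2,
            ∑ PA : (Fin nA → ZMod 2) × (Fin nA → ZMod 2),
              Fmat nA RA PA * otoc nA nB nC nD U PA.1 PA.2 xq zq := by
      simp only [Finset.mul_sum]
      rw [Finset.sum_comm]
      exact Finset.sum_congr rfl fun xq _ => Finset.sum_comm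
    rw [step]
    exact Finset.sum_eq_zero fun xq _ => Finset.sum_eq_zero fun zq _ => hzero xq zq
  rw [htot] at hzero'
  exact mul_ne_zero (two_pow_ne nD) (two_pow_ne nD) hzero'
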